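/- Let $V_1, \ldots, V_n, V_{n+1}$ be exchangeable real-valued random variables and let $U$ be uniformly distributed on $[0,1]$ and independent of $(V_1, \ldots, V_{n+1})$. Then the statistic $T = \frac{1}{n+1}\left(\sum_{i=1}^n \mathbb{1}\{V_i < V_{n+1}\} + U \cdot \left(1 + \sum_{i=1}^n \mathbb{1}\{V_i = V_{n+1}\}\right)\right)$ is uniformly distributed on $[0,1]$. -/

import Mathlib

open Finset

namespace RRU
variable {n : ℕ}

noncomputable def aC (n : ℕ) (v : Fin (n+1) → ℝ) (j : Fin (n+1)) : ℕ :=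
  (univ.filter (fun i => v i < v j)).card

noncomputable def kC (n : ℕ) (v : Fin (n+1) → ℝ) (j : Fin (n+1)) : ℕ :=
  (univ.filter (fun i => v i = v j)).card

lemma kC_pos (v : Fin (n+1) → ℝ) (j : Fin (n+1)) : 0 < kC n v j := by
  apply Finset.card_pos.2 ⟨j, by simp⟩

lemma aC_add_kC (v : Fin (n+1) → ℝ) (j : Fin (n+1)) :
    aC n v j + kC n v j = (univ.filter (fun i => v i ≤ v j)).card := by
  rw [aC, kC, ← Finset.card_union_of_disjoint]
  · congr 1
    ext i
    simp [le_iff_lt_or_eq]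
  · rw [Finset.disjoint_filter]
    intro i _ hlt heq
    exact absurd heq (ne_of_lt hlt)

lemma b_le (v : Fin (n+1) → ℝ) (j : Fin (n+1)) :
    aC n v j + kC n v j ≤ n + 1 := by
  rw [aC_add_kC]
  calc (univ.filter (fun i => v i ≤ v j)).card ≤ (univ : Finset (Fin (n+1))).card :=
        Finset.card_filter_le _ _
    _ = n + 1 := by simp

/-- Sub-claim B: for each m ≤ n there is a j whose rank interval covers m. -/
lemma exists_cover (v : Fin (n+1) → ℝ) (m : ℕ) (hm : m ≤ n) :
    ∃ j, aC n v j ≤ m ∧ m < aC n v j + kC n v j := by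
  classical
  -- set of j with aC ≤ m is nonempty (the argmin)
  obtain ⟨j₀, -, hj₀⟩ := Finset.exists_min_image (univ : Finset (Fin (n+1))) v ⟨0, mem_univ 0⟩
  have hS : (univ.filter (fun j => aC n v j ≤ m)).Nonempty := by
    refine ⟨j₀, ?_⟩
    simp only [mem_filter, mem_univ, true_and]
    have h0 : aC n v j₀ = 0 := by
      rw [aC, Finset.card_eq_zero, Finset.filter_eq_empty_iff]
      intro i _
      exact not_lt.2 (hj₀ i (mem_univ i))
    omega
  obtain ⟨j, hjmem, hjmax⟩ := Finset.exists_max_image _ (aC n v) hS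
  simp only [mem_filter, mem_univ, true_and] at hjmem
  refine ⟨j, hjmem, ?_⟩
  by_contra hcon
  push_neg at hcon
  -- b j ≤ m; find an i₀ with minimal value among those > v j
  have hblt : (univ.filter (fun i => v i ≤ v j)).card < (univ : Finset (Fin (n+1))).card := by
    rw [← aC_add_kC]
    simp only [Finset.card_univ, Fintype.card_fin]
    omega
  have : ∃ i, v j < v i := by
    by_contra h
    push_neg at h
    have : (univ.filter (fun i => v i ≤ v j)) = univ := by
      rw [Finset.filter_eq_self]; intro i _; exact h i
    rw [this] at hblt; omega
  obtain ⟨i₁, hi₁⟩ := this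
  obtain ⟨i₀, hi₀mem, hi₀min⟩ := Finset.exists_min_image (univ.filter (fun i => v j < v i)) v
    ⟨i₁, by simpa using hi₁⟩
  simp only [mem_filter, mem_univ, true_and] at hi₀mem
  have hset : (univ.filter (fun i => v i < v i₀)) = (univ.filter (fun i => v i ≤ v j)) := by
    ext i
    simp only [mem_filter, mem_univ, true_and]
    constructor
    · intro hlt
      by_contra hle
      push_neg at hle
      exact absurd hlt (not_lt.2 (hi₀min i (by simpa using hle)))
    · intro hle
      exact lt_of_le_of_lt hle hi₀mem
  have ha : aC n v i₀ = aC n v j + kC n v j := by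
    rw [aC, hset, ← aC_add_kC]
  have hi₀S : i₀ ∈ univ.filter (fun j => aC n v j ≤ m) := by
    simp only [mem_filter, mem_univ, true_and]
    omega
  have := hjmax i₀ hi₀S
  have := kC_pos v j
  omega

/-- Sub-claim A: two covering indices have equal value. -/
lemma cover_eq (v : Fin (n+1) → ℝ) (m : ℕ) {j j' : Fin (n+1)}
    (h : aC n v j ≤ m ∧ m < aC n v j + kC n v j)
    (h' : aC n v j' ≤ m ∧ m < aC n v j' + kC n v j') : v j = v j' := by
  rcases lt_trichotomy (v j) (v j') with hlt | heq | hlt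
  · exfalso
    have hsub : (univ.filter (fun i => v i ≤ v j)) ⊆ (univ.filter (fun i => v i < v j')) := by
      intro i; simp only [mem_filter, mem_univ, true_and]
      exact fun hi => lt_of_le_of_lt hi hlt
    have := Finset.card_le_card hsub
    rw [← aC_add_kC] at this
    rw [show (univ.filter (fun i => v i < v j')).card = aC n v j' from rfl] at this
    omega
  · exact heq
  · exfalso
    have hsub : (univ.filter (fun i => v i ≤ v j')) ⊆ (univ.filter (fun i => v i < v j)) := by
      intro i; simp only [mem_filter, mem_univ, true_and]
      exact fun hi => lt_of_le_of_lt hi hlt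
    have := Finset.card_le_card hsub
    rw [← aC_add_kC] at this
    rw [show (univ.filter (fun i => v i < v j)).card = aC n v j from rfl] at this
    omega

lemma aC_congr (v : Fin (n+1) → ℝ) {j j' : Fin (n+1)} (h : v j = v j') :
    aC n v j = aC n v j' := by unfold aC; rw [h]

lemma kC_congr (v : Fin (n+1) → ℝ) {j j' : Fin (n+1)} (h : v j = v j') :
    kC n v j = kC n v j' := by unfold kC; rw [h]

/-- Step 4: weighted count of covering indices is 1. -/
lemma sum_cover (v : Fin (n+1) → ℝ) (m : ℕ) (hm : m ≤ n) :
    ∑ j : Fin (n+1), (if aC n v j ≤ m ∧ m < aC n v j + kC n v j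
      then ((kC n v j : ℝ))⁻¹ else 0) = 1 := by
  classical
  obtain ⟨j₀, hj₀⟩ := exists_cover v m hm
  rw [Finset.sum_ite, Finset.sum_const_zero, add_zero]
  have hG : (univ.filter (fun j => aC n v j ≤ m ∧ m < aC n v j + kC n v j))
      = univ.filter (fun j => v j = v j₀) := by
    ext j
    simp only [mem_filter, mem_univ, true_and]
    constructor
    · intro hj; exact cover_eq v m hj hj₀
    · intro hj
      rw [aC_congr v hj, kC_congr v hj]
      exact hj₀
  rw [hG]
  have : ∀ j ∈ univ.filter (fun j => v j = v j₀), ((kC n v j : ℝ))⁻¹ = ((kC n v j₀ : ℝ))⁻¹ := by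
    intro j hj
    simp only [mem_filter, mem_univ, true_and] at hj
    rw [kC_congr v hj]
  rw [Finset.sum_congr rfl this, Finset.sum_const]
  have hcard : (univ.filter (fun j => v j = v j₀)).card = kC n v j₀ := rfl
  rw [hcard, nsmul_eq_mul]
  have := kC_pos v j₀
  field_simp


/-- Step 1: clamp formula. -/
lemma clamp_eq {x L K : ℝ} (hx : 0 ≤ x) (hL : 0 ≤ L) (hK : 0 < K) :
    max 0 (min ((x - L)/K) 1) = (min x (L + K) - min x L)/K := by
  rcases le_total x L with h | h
  · have h1 : (x - L)/K ≤ 0 := by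
      apply div_nonpos_of_nonpos_of_nonneg <;> linarith
    rw [min_eq_left (h1.trans zero_le_one), max_eq_left h1,
      min_eq_left (h.trans (by linarith)), min_eq_left h]
    simp
  · rcases le_total x (L + K) with h2 | h2
    · have h1 : 0 ≤ (x - L)/K := div_nonneg (by linarith) hK.le
      have h3 : (x - L)/K ≤ 1 := (div_le_one hK).2 (by linarith)
      rw [min_eq_left h3, max_eq_right h1, min_eq_left h2, min_eq_right h]
    · have h3 : (1:ℝ) ≤ (x - L)/K := (one_le_div hK).2 (by linarith)
      rw [min_eq_right h3, max_eq_right zero_le_one, min_eq_right h2,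
        min_eq_right (by linarith : L ≤ x)]
      field_simp
      ring

lemma tele (x : ℝ) (hx : 0 ≤ x) (N : ℕ) :
    ∑ m ∈ Finset.range N, (min x ((m:ℝ)+1) - min x (m:ℝ)) = min x (N:ℝ) := by
  have h := Finset.sum_range_sub (f := fun m : ℕ => min x (m:ℝ)) N
  push_cast at h
  rw [h, min_eq_right hx, sub_zero]

/-- Step 2: interval decomposition of each clamp term. -/
lemma clamp_term (v : Fin (n+1) → ℝ) (x : ℝ) (hx : 0 ≤ x) (j : Fin (n+1)) :
    max 0 (min ((x - (aC n v j : ℝ))/(kC n v j : ℝ)) 1)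
      = ∑ m ∈ Finset.range (n+1),
          (min x ((m:ℝ)+1) - min x (m:ℝ)) *
            (if aC n v j ≤ m ∧ m < aC n v j + kC n v j then ((kC n v j : ℝ))⁻¹ else 0) := by
  classical
  have hK : (0:ℝ) < (kC n v j : ℝ) := by exact_mod_cast kC_pos v j
  have hL : (0:ℝ) ≤ (aC n v j : ℝ) := Nat.cast_nonneg _
  rw [clamp_eq hx hL hK]
  set L := aC n v j with hLdef
  set K := kC n v j with hKdef
  have hsub : Finset.Ico L (L + K) ⊆ Finset.range (n+1) := by
    intro m hm
    simp only [Finset.mem_Ico] at hm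
    have := b_le v j
    simp only [Finset.mem_range]
    omega
  have htel : min x ((L:ℝ) + (K:ℝ)) - min x (L:ℝ)
      = ∑ m ∈ Finset.Ico L (L + K), (min x ((m:ℝ)+1) - min x (m:ℝ)) := by
    rw [Finset.sum_Ico_eq_sub _ (Nat.le_add_right L K), tele x hx, tele x hx]
    push_cast
    ring
  have hcond : ∀ m : ℕ, (L ≤ m ∧ m < L + K) ↔ m ∈ Finset.Ico L (L + K) := by
    intro m; simp [Finset.mem_Ico]
  calc (min x ((L:ℝ) + (K:ℝ)) - min x (L:ℝ))/(K:ℝ)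
      = ∑ m ∈ Finset.Ico L (L + K), (min x ((m:ℝ)+1) - min x (m:ℝ)) * ((K:ℝ))⁻¹ := by
        rw [htel, ← Finset.sum_mul, ← div_eq_mul_inv]
    _ = ∑ m ∈ Finset.range (n+1) ∩ Finset.Ico L (L + K),
          (min x ((m:ℝ)+1) - min x (m:ℝ)) * ((K:ℝ))⁻¹ := by
        rw [Finset.inter_eq_right.2 hsub]
    _ = ∑ m ∈ Finset.range (n+1),
          (if m ∈ Finset.Ico L (L + K) then (min x ((m:ℝ)+1) - min x (m:ℝ)) * ((K:ℝ))⁻¹ else 0) := by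
        rw [Finset.sum_ite_mem]
    _ = _ := by
        refine Finset.sum_congr rfl fun m _ => ?_
        simp only [mul_ite, mul_zero, hcond m]

/-- The key combinatorial identity. -/
lemma key_identity (v : Fin (n+1) → ℝ) (x : ℝ) (hx : 0 ≤ x) :
    ∑ j : Fin (n+1), max 0 (min ((x - (aC n v j : ℝ))/(kC n v j : ℝ)) 1)
      = min x ((n:ℝ)+1) := by
  classical
  have : ∑ j : Fin (n+1), max 0 (min ((x - (aC n v j : ℝ))/(kC n v j : ℝ)) 1)
      = ∑ m ∈ Finset.range (n+1), (min x ((m:ℝ)+1) - min x (m:ℝ)) := by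
    rw [Finset.sum_congr rfl (fun j _ => clamp_term v x hx j), Finset.sum_comm]
    refine Finset.sum_congr rfl fun m hm => ?_
    rw [← Finset.mul_sum, sum_cover v m (by simpa using Nat.lt_succ_iff.1 (Finset.mem_range.1 hm)), mul_one]
  rw [this]
  have := tele x hx (n+1)
  push_cast at this
  exact this


/- ## Measure-theoretic part -/
open MeasureTheory ProbabilityTheory

lemma aC_cast (v : Fin (n+1) → ℝ) (j : Fin (n+1)) :
    ((aC n v j : ℝ)) = ∑ i : Fin (n+1), if v i < v j then (1:ℝ) else 0 := by
  rw [aC, Finset.card_filter]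
  push_cast
  rfl

lemma kC_cast (v : Fin (n+1) → ℝ) (j : Fin (n+1)) :
    ((kC n v j : ℝ)) = ∑ i : Fin (n+1), if v i = v j then (1:ℝ) else 0 := by
  rw [kC, Finset.card_filter]
  push_cast
  rfl

lemma aC_last (v : Fin (n+1) → ℝ) :
    ((aC n v (Fin.last n) : ℝ))
      = ∑ i : Fin n, if v i.castSucc < v (Fin.last n) then (1:ℝ) else 0 := by
  rw [aC_cast, Fin.sum_univ_castSucc]
  simp

lemma kC_last (v : Fin (n+1) → ℝ) :
    ((kC n v (Fin.last n) : ℝ))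
      = 1 + ∑ i : Fin n, if v i.castSucc = v (Fin.last n) then (1:ℝ) else 0 := by
  rw [kC_cast, Fin.sum_univ_castSucc]
  simp [add_comm]

lemma measurable_aCr (j : Fin (n+1)) :
    Measurable (fun v : Fin (n+1) → ℝ => (aC n v j : ℝ)) := by
  simp only [aC_cast]
  exact Finset.measurable_sum _ fun i _ =>
    Measurable.ite (measurableSet_lt (measurable_pi_apply i) (measurable_pi_apply j))
      measurable_const measurable_const

lemma measurable_kCr (j : Fin (n+1)) :
    Measurable (fun v : Fin (n+1) → ℝ => (kC n v j : ℝ)) := by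
  simp only [kC_cast]
  exact Finset.measurable_sum _ fun i _ =>
    Measurable.ite (measurableSet_eq_fun (measurable_pi_apply i) (measurable_pi_apply j))
      measurable_const measurable_const

lemma aC_perm (σ : Equiv.Perm (Fin (n+1))) (v : Fin (n+1) → ℝ) (j : Fin (n+1)) :
    aC n (fun i => v (σ i)) j = aC n v (σ j) := by
  classical
  rw [aC, aC, Finset.card_filter, Finset.card_filter]
  exact Equiv.sum_comp σ (fun i => if v i < v (σ j) then 1 else 0)

lemma kC_perm (σ : Equiv.Perm (Fin (n+1))) (v : Fin (n+1) → ℝ) (j : Fin (n+1)) :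
    kC n (fun i => v (σ i)) j = kC n v (σ j) := by
  classical
  rw [kC, kC, Finset.card_filter, Finset.card_filter]
  exact Equiv.sum_comp σ (fun i => if v i = v (σ j) then 1 else 0)

/-- The integrand: probability that `u` falls below the randomized threshold. -/
noncomputable def F (n : ℕ) (x : ℝ) (j : Fin (n+1)) (v : Fin (n+1) → ℝ) : ENNReal :=
  ENNReal.ofReal (max 0 (min ((x - (aC n v j : ℝ))/(kC n v j : ℝ)) 1))

lemma measurable_F (x : ℝ) (j : Fin (n+1)) : Measurable (F n x j) :=
  ENNReal.measurable_ofReal.comp <| (measurable_const.max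
    (((measurable_const.sub (measurable_aCr j)).div (measurable_kCr j)).min measurable_const))

lemma ofReal_min_clamp (y : ℝ) :
    ENNReal.ofReal (min 1 y) = ENNReal.ofReal (max 0 (min y 1)) := by
  rcases le_total 0 (min y 1) with h | h
  · rw [max_eq_right h, min_comm]
  · rw [ENNReal.ofReal_of_nonpos (by rwa [min_comm] at h), max_eq_left h, ENNReal.ofReal_zero]

/-- Main integral computation: the integral of `F n x (Fin.last n)` w.r.t. an
exchangeable probability law equals `min x (n+1)` (for `x ≥ 0`), scaled down. -/
lemma integral_F (μ : Measure (Fin (n+1) → ℝ)) [IsProbabilityMeasure μ]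
    (hμinv : ∀ σ : Equiv.Perm (Fin (n+1)),
      μ.map (fun v i => v (σ i)) = μ) (x : ℝ) (hx : 0 ≤ x) :
    ((n:ENNReal)+1) * ∫⁻ v, F n x (Fin.last n) v ∂μ = ENNReal.ofReal (min x ((n:ℝ)+1)) := by
  classical
  have hperm : ∀ j : Fin (n+1), ∫⁻ v, F n x j v ∂μ = ∫⁻ v, F n x (Fin.last n) v ∂μ := by
    intro j
    set σ := Equiv.swap j (Fin.last n) with hσ
    have hTm : Measurable (fun v : Fin (n+1) → ℝ => fun i => v (σ i)) :=
      measurable_pi_lambda _ fun i => measurable_pi_apply (σ i)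
    calc ∫⁻ v, F n x j v ∂μ
        = ∫⁻ v, F n x (Fin.last n) v ∂(μ.map (fun v i => v (σ i))) := by
          rw [lintegral_map (measurable_F x _) hTm]
          refine lintegral_congr fun v => ?_
          unfold F
          rw [aC_perm σ v (Fin.last n), kC_perm σ v (Fin.last n)]
          rw [Equiv.swap_apply_right]
      _ = _ := by rw [hμinv σ]
  have hsum : ∑ j : Fin (n+1), ∫⁻ v, F n x j v ∂μ
      = ENNReal.ofReal (min x ((n:ℝ)+1)) := by
    rw [← lintegral_finset_sum _ (fun j _ => measurable_F x j)]
    have : ∀ v, ∑ j : Fin (n+1), F n x j v = ENNReal.ofReal (min x ((n:ℝ)+1)) := by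
      intro v
      unfold F
      rw [← ENNReal.ofReal_sum_of_nonneg (fun j _ => le_max_left _ _)]
      rw [key_identity v x hx]
    rw [lintegral_congr this, lintegral_const, measure_univ, mul_one]
  rw [← hsum, Finset.sum_congr rfl (fun j _ => hperm j), Finset.sum_const]
  simp [Finset.card_univ, nsmul_eq_mul, add_comm]


noncomputable def gS (n : ℕ) : (Fin (n+1) → ℝ) × ℝ → ℝ := fun p =>
  (1/((n:ℝ)+1)) * ((aC n p.1 (Fin.last n) : ℝ) + p.2 * (kC n p.1 (Fin.last n) : ℝ))

lemma measurable_gS : Measurable (gS n) :=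
  measurable_const.mul
    (((measurable_aCr (Fin.last n)).comp measurable_fst).add
      (measurable_snd.mul ((measurable_kCr (Fin.last n)).comp measurable_fst)))

lemma gS_section (t : ℝ) (v : Fin (n+1) → ℝ) :
    {u : ℝ | gS n (v, u) ≤ t}
      = Set.Iic ((((n:ℝ)+1)*t - (aC n v (Fin.last n) : ℝ))/(kC n v (Fin.last n) : ℝ)) := by
  have hK : (0:ℝ) < (kC n v (Fin.last n) : ℝ) := by exact_mod_cast kC_pos v (Fin.last n)
  have hnp : (0:ℝ) < (n:ℝ)+1 := by positivity
  ext u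
  simp only [Set.mem_setOf_eq, Set.mem_Iic, gS]
  rw [le_div_iff₀ hK, one_div, inv_mul_le_iff₀ hnp]
  constructor
  · intro h; linarith
  · intro h; linarith

lemma restrict_Iic_apply (c : ℝ) :
    (volume.restrict (Set.Icc (0:ℝ) 1)) (Set.Iic c) = ENNReal.ofReal (min 1 c) := by
  rw [Measure.restrict_apply measurableSet_Iic]
  have h : Set.Iic c ∩ Set.Icc (0:ℝ) 1 = Set.Icc (0:ℝ) (min 1 c) := by
    ext u
    simp only [Set.mem_inter_iff, Set.mem_Iic, Set.mem_Icc, le_min_iff]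
    constructor
    · rintro ⟨h1, h2, h3⟩; exact ⟨h2, h3, h1⟩
    · rintro ⟨h1, h2, h3⟩; exact ⟨h3, h1, h2⟩
  rw [h, Real.volume_Icc, sub_zero]

lemma map_gS_eq (μ : Measure (Fin (n+1) → ℝ)) [IsProbabilityMeasure μ]
    (hμinv : ∀ σ : Equiv.Perm (Fin (n+1)), μ.map (fun v i => v (σ i)) = μ) :
    (μ.prod (volume.restrict (Set.Icc (0:ℝ) 1))).map (gS n)
      = volume.restrict (Set.Icc (0:ℝ) 1) := by
  classical
  set ν := volume.restrict (Set.Icc (0:ℝ) 1) with hνdef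
  haveI : IsFiniteMeasure ν := ⟨by
    rw [hνdef, Measure.restrict_apply_univ]
    simp [Real.volume_Icc]⟩
  haveI : IsFiniteMeasure ((μ.prod ν).map (gS n)) := ⟨by
    rw [Measure.map_apply measurable_gS MeasurableSet.univ]
    exact measure_lt_top _ _⟩
  refine Measure.ext_of_Iic _ _ fun t => ?_
  rw [Measure.map_apply measurable_gS measurableSet_Iic,
    Measure.prod_apply (measurable_gS measurableSet_Iic)]
  have hsec : ∀ v : Fin (n+1) → ℝ, ν (Prod.mk v ⁻¹' (gS n ⁻¹' Set.Iic t))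
      = ENNReal.ofReal (min 1
          ((((n:ℝ)+1)*t - (aC n v (Fin.last n) : ℝ))/(kC n v (Fin.last n) : ℝ))) := by
    intro v
    have : Prod.mk v ⁻¹' (gS n ⁻¹' Set.Iic t) = {u : ℝ | gS n (v, u) ≤ t} := rfl
    rw [this, gS_section t v, hνdef, restrict_Iic_apply]
  rw [lintegral_congr hsec, hνdef, restrict_Iic_apply]
  rcases lt_or_ge t 0 with ht | ht
  · have hz : ∀ v : Fin (n+1) → ℝ, ENNReal.ofReal (min 1
        ((((n:ℝ)+1)*t - (aC n v (Fin.last n) : ℝ))/(kC n v (Fin.last n) : ℝ))) = 0 := by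
      intro v
      have hK : (0:ℝ) < (kC n v (Fin.last n) : ℝ) := by exact_mod_cast kC_pos v (Fin.last n)
      have hnum : (((n:ℝ)+1)*t - (aC n v (Fin.last n) : ℝ)) < 0 := by
        have h1 : ((n:ℝ)+1)*t < 0 := mul_neg_of_pos_of_neg (by positivity) ht
        have h2 : (0:ℝ) ≤ (aC n v (Fin.last n) : ℝ) := Nat.cast_nonneg _
        linarith
      have hc : (((n:ℝ)+1)*t - (aC n v (Fin.last n) : ℝ))/(kC n v (Fin.last n) : ℝ) < 0 :=
        div_neg_of_neg_of_pos hnum hK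
      exact ENNReal.ofReal_of_nonpos (le_of_lt (lt_of_le_of_lt (min_le_right _ _) hc))
    rw [lintegral_congr hz, lintegral_zero]
    rw [eq_comm, ENNReal.ofReal_eq_zero]
    exact le_of_lt (lt_of_le_of_lt (min_le_right _ _) ht)
  · set x := ((n:ℝ)+1)*t with hxdef
    have hx : 0 ≤ x := mul_nonneg (by positivity) ht
    have hF : ∀ v : Fin (n+1) → ℝ, ENNReal.ofReal (min 1
        ((x - (aC n v (Fin.last n) : ℝ))/(kC n v (Fin.last n) : ℝ))) = F n x (Fin.last n) v := by
      intro v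
      unfold F
      exact ofReal_min_clamp _
    rw [lintegral_congr hF]
    have key := integral_F μ hμinv x hx
    have hmin : min x ((n:ℝ)+1) = ((n:ℝ)+1) * min t 1 := by
      rcases le_total t 1 with h | h
      · rw [min_eq_left h, hxdef, min_eq_left]
        nlinarith
      · rw [min_eq_right h, hxdef, min_eq_right]
        · ring
        · nlinarith
    rw [hmin, ENNReal.ofReal_mul (by positivity : (0:ℝ) ≤ (n:ℝ)+1)] at key
    have hofn : ENNReal.ofReal ((n:ℝ)+1) = (n:ENNReal)+1 := by
      rw [ENNReal.ofReal_add (Nat.cast_nonneg n) zero_le_one, ENNReal.ofReal_natCast,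
        ENNReal.ofReal_one]
    rw [hofn] at key
    have hne : ((n:ENNReal)+1) ≠ 0 := by simp
    have hnt : ((n:ENNReal)+1) ≠ ⊤ := ENNReal.add_ne_top.2 ⟨ENNReal.natCast_ne_top n, ENNReal.one_ne_top⟩
    have := (ENNReal.mul_right_inj hne hnt).mp key
    rw [this, min_comm]

end RRU

open MeasureTheory ProbabilityTheory

theorem randomized_rank_uniform
    {Ω : Type*} [MeasurableSpace Ω] (P : Measure Ω) [IsProbabilityMeasure P]
    (n : ℕ) (V : Fin (n + 1) → Ω → ℝ) (U : Ω → ℝ)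
    (hV : ∀ i, Measurable (V i)) (hU : Measurable U)
    (hexch : ∀ σ : Equiv.Perm (Fin (n + 1)),
      P.map (fun ω => (fun i => V (σ i) ω)) = P.map (fun ω => (fun i => V i ω)))
    (hUunif : P.map U = volume.restrict (Set.Icc (0 : ℝ) 1))
    (hindep : IndepFun U (fun ω => (fun i => V i ω)) P) :
    P.map (fun ω =>
        (1 / (n + 1 : ℝ)) *
          ((∑ i : Fin n, if V i.castSucc ω < V (Fin.last n) ω then (1 : ℝ) else 0) +
            U ω * (1 + ∑ i : Fin n,
              if V i.castSucc ω = V (Fin.last n) ω then (1 : ℝ) else 0))) =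
      volume.restrict (Set.Icc (0 : ℝ) 1) := by
  classical
  have hVvm : Measurable (fun ω => (fun i => V i ω)) := measurable_pi_lambda _ hV
  have hpair := (ProbabilityTheory.indepFun_iff_map_prod_eq_prod_map_map
    hVvm.aemeasurable hU.aemeasurable).mp hindep.symm
  haveI : IsProbabilityMeasure (P.map (fun ω => (fun i => V i ω))) :=
    Measure.isProbabilityMeasure_map hVvm.aemeasurable
  have hcomp : (fun ω =>
        (1 / (n + 1 : ℝ)) *
          ((∑ i : Fin n, if V i.castSucc ω < V (Fin.last n) ω then (1 : ℝ) else 0) +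
            U ω * (1 + ∑ i : Fin n,
              if V i.castSucc ω = V (Fin.last n) ω then (1 : ℝ) else 0)))
      = (RRU.gS n) ∘ (fun ω => ((fun i => V i ω), U ω)) := by
    funext ω
    show _ = RRU.gS n ((fun i => V i ω), U ω)
    rw [RRU.gS]
    simp only
    rw [RRU.aC_last, RRU.kC_last]
  rw [hcomp, ← Measure.map_map RRU.measurable_gS (hVvm.prodMk hU), hpair, hUunif]
  have hμinv : ∀ σ : Equiv.Perm (Fin (n+1)),
      (P.map (fun ω => (fun i => V i ω))).map (fun v i => v (σ i))
        = P.map (fun ω => (fun i => V i ω)) := by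
    intro σ
    have hTm : Measurable (fun v : Fin (n+1) → ℝ => fun i => v (σ i)) :=
      measurable_pi_lambda _ fun i => measurable_pi_apply (σ i)
    rw [Measure.map_map hTm hVvm]
    exact hexch σ
  exact RRU.map_gS_eq _ hμinv
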